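/- Let P be a probability measure on ℝ, τ ∈ (0,1), and Φ(q) = ∫_ℝ (ρ_τ(x - q) - ρ_τ(x)) dP(x). Then q̄ minimizes Φ on ℝ if and only if q̄ is a τ-quantile of P, i.e., P((-∞, q̄)) ≤ τ ≤ P((-∞, q̄]). -/

import Mathlib

open MeasureTheory

noncomputable def rho (τ : ℝ) (x : ℝ) : ℝ := if x ≤ 0 then (τ - 1) * x else τ * x

lemma rho_meas (τ : ℝ) : Measurable (rho τ) := by
  unfold rho
  exact Measurable.ite measurableSet_Iic (measurable_const.mul measurable_id)
    (measurable_const.mul measurable_id)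

lemma rho_lip {τ : ℝ} (hτ : τ ∈ Set.Ioo (0:ℝ) 1) (u v : ℝ) :
    |rho τ u - rho τ v| ≤ |u - v| := by
  obtain ⟨h0, h1⟩ := hτ
  rw [abs_sub_le_iff]
  unfold rho
  rcases le_total u v with huv | huv
  · rw [abs_of_nonpos (by linarith : u - v ≤ 0)]
    constructor <;> split_ifs <;> nlinarith
  · rw [abs_of_nonneg (by linarith : 0 ≤ u - v)]
    constructor <;> split_ifs <;> nlinarith

lemma g_int (P : Measure ℝ) [IsProbabilityMeasure P] {τ : ℝ} (hτ : τ ∈ Set.Ioo (0:ℝ) 1)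
    (q : ℝ) : Integrable (fun x => rho τ (x - q) - rho τ x) P := by
  have hm : Measurable fun x => rho τ (x - q) - rho τ x :=
    ((rho_meas τ).comp (measurable_id.sub measurable_const)).sub (rho_meas τ)
  refine ⟨hm.aestronglyMeasurable, ?_⟩
  apply HasFiniteIntegral.of_bounded (C := |q|)
  filter_upwards with x
  have := rho_lip hτ (x - q) x
  simpa [Real.norm_eq_abs, abs_sub_comm] using this

lemma sub_grad {τ : ℝ} (hτ : τ ∈ Set.Ioo (0:ℝ) 1) (x c q : ℝ) :
    (if x ≤ c then τ - 1 else τ) * (c - q) ≤ rho τ (x - q) - rho τ (x - c) := by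
  obtain ⟨h0, h1⟩ := hτ
  unfold rho
  split_ifs <;> nlinarith

lemma sub_grad_lt {τ : ℝ} (hτ : τ ∈ Set.Ioo (0:ℝ) 1) (x c q : ℝ) :
    (if x < c then τ - 1 else τ) * (c - q) ≤ rho τ (x - q) - rho τ (x - c) := by
  obtain ⟨h0, h1⟩ := hτ
  unfold rho
  split_ifs <;> nlinarith

lemma s_int (P : Measure ℝ) [IsProbabilityMeasure P] (τ c r : ℝ) :
    Integrable (fun x : ℝ => (if x ≤ c then τ - 1 else τ) * r) P := by
  have h : (fun x : ℝ => (if x ≤ c then τ - 1 else τ) * r)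
      = fun x => (τ - (Set.Iic c).indicator (fun _ => (1:ℝ)) x) * r := by
    ext x; by_cases h : x ≤ c <;> simp [Set.indicator_apply, Set.mem_Iic, h]
  rw [h]
  exact ((integrable_const τ).sub ((integrable_const 1).indicator measurableSet_Iic)).mul_const r

lemma s_integral (P : Measure ℝ) [IsProbabilityMeasure P] (τ c r : ℝ) :
    ∫ x, (if x ≤ c then τ - 1 else τ) * r ∂P = (τ - (P (Set.Iic c)).toReal) * r := by
  have h : (fun x : ℝ => (if x ≤ c then τ - 1 else τ) * r)
      = fun x => (τ - (Set.Iic c).indicator (fun _ => (1:ℝ)) x) * r := by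
    ext x; by_cases h : x ≤ c <;> simp [Set.indicator_apply, Set.mem_Iic, h]
  rw [h, integral_mul_const,
    integral_sub (integrable_const τ) ((integrable_const 1).indicator measurableSet_Iic),
    integral_const, integral_indicator_const _ measurableSet_Iic]
  simp [measure_univ, Measure.real]

lemma s_int_lt (P : Measure ℝ) [IsProbabilityMeasure P] (τ c r : ℝ) :
    Integrable (fun x : ℝ => (if x < c then τ - 1 else τ) * r) P := by
  have h : (fun x : ℝ => (if x < c then τ - 1 else τ) * r)
      = fun x => (τ - (Set.Iio c).indicator (fun _ => (1:ℝ)) x) * r := by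
    ext x; by_cases h : x < c <;> simp [Set.indicator_apply, Set.mem_Iio, h]
  rw [h]
  exact ((integrable_const τ).sub ((integrable_const 1).indicator measurableSet_Iio)).mul_const r

lemma s_integral_lt (P : Measure ℝ) [IsProbabilityMeasure P] (τ c r : ℝ) :
    ∫ x, (if x < c then τ - 1 else τ) * r ∂P = (τ - (P (Set.Iio c)).toReal) * r := by
  have h : (fun x : ℝ => (if x < c then τ - 1 else τ) * r)
      = fun x => (τ - (Set.Iio c).indicator (fun _ => (1:ℝ)) x) * r := by
    ext x; by_cases h : x < c <;> simp [Set.indicator_apply, Set.mem_Iio, h]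
  rw [h, integral_mul_const,
    integral_sub (integrable_const τ) ((integrable_const 1).indicator measurableSet_Iio),
    integral_const, integral_indicator_const _ measurableSet_Iio]
  simp [measure_univ, Measure.real]

lemma est_lower_le (P : Measure ℝ) [IsProbabilityMeasure P] {τ : ℝ}
    (hτ : τ ∈ Set.Ioo (0:ℝ) 1) (q c : ℝ) :
    (τ - (P (Set.Iic c)).toReal) * (c - q) ≤
      (∫ x, (rho τ (x - q) - rho τ x) ∂P) - (∫ x, (rho τ (x - c) - rho τ x) ∂P) := by
  rw [← integral_sub (g_int P hτ q) (g_int P hτ c), ← s_integral P τ c (c - q)]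
  refine integral_mono (s_int P τ c (c - q)) ((g_int P hτ q).sub (g_int P hτ c)) fun x => ?_
  have h := sub_grad hτ x c q
  dsimp only
  linarith

lemma est_lower_lt (P : Measure ℝ) [IsProbabilityMeasure P] {τ : ℝ}
    (hτ : τ ∈ Set.Ioo (0:ℝ) 1) (q c : ℝ) :
    (τ - (P (Set.Iio c)).toReal) * (c - q) ≤
      (∫ x, (rho τ (x - q) - rho τ x) ∂P) - (∫ x, (rho τ (x - c) - rho τ x) ∂P) := by
  rw [← integral_sub (g_int P hτ q) (g_int P hτ c), ← s_integral_lt P τ c (c - q)]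
  refine integral_mono (s_int_lt P τ c (c - q)) ((g_int P hτ q).sub (g_int P hτ c)) fun x => ?_
  have h := sub_grad_lt hτ x c q
  dsimp only
  linarith

lemma est_upper (P : Measure ℝ) [IsProbabilityMeasure P] {τ : ℝ}
    (hτ : τ ∈ Set.Ioo (0:ℝ) 1) (q c : ℝ) :
    (∫ x, (rho τ (x - q) - rho τ x) ∂P) - (∫ x, (rho τ (x - c) - rho τ x) ∂P) ≤
      (τ - (P (Set.Iic q)).toReal) * (c - q) := by
  rw [← integral_sub (g_int P hτ q) (g_int P hτ c), ← s_integral P τ q (c - q)]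
  refine integral_mono ((g_int P hτ q).sub (g_int P hτ c)) (s_int P τ q (c - q)) fun x => ?_
  have h := sub_grad hτ x q c
  have h2 : (if x ≤ q then τ - 1 else τ) * (c - q) = -((if x ≤ q then τ - 1 else τ) * (q - c)) := by
    ring
  dsimp only
  linarith

lemma exists_lt_quantile (P : Measure ℝ) [IsProbabilityMeasure P] {c τ : ℝ} (hτ0 : 0 ≤ τ)
    (h : τ < (P (Set.Iio c)).toReal) : ∃ q < c, τ < (P (Set.Iic q)).toReal := by
  by_contra hcon
  push_neg at hcon
  have hU : Set.Iio c = ⋃ n : ℕ, Set.Iic (c - 1 / (n + 1)) := by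
    ext x
    simp only [Set.mem_Iio, Set.mem_iUnion, Set.mem_Iic]
    constructor
    · intro hx
      obtain ⟨n, hn⟩ := exists_nat_one_div_lt (sub_pos.mpr hx)
      exact ⟨n, by linarith⟩
    · rintro ⟨n, hn⟩
      have hp : (0:ℝ) < 1 / (n + 1) := by positivity
      linarith
  have hmono : Monotone fun n : ℕ => Set.Iic (c - 1 / ((n:ℝ) + 1)) := by
    intro m n hmn
    apply Set.Iic_subset_Iic.mpr
    have h1 : (1:ℝ) / (n + 1) ≤ 1 / (m + 1) := by
      apply one_div_le_one_div_of_le (by positivity)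
      exact_mod_cast by omega
    linarith
  have hle : P (Set.Iio c) ≤ ENNReal.ofReal τ := by
    rw [hU, Directed.measure_iUnion hmono.directed_le]
    refine iSup_le fun n => ?_
    have hq : c - 1 / ((n:ℝ) + 1) < c := by
      have hp : (0:ℝ) < 1 / (n + 1) := by positivity
      linarith
    exact (ENNReal.le_ofReal_iff_toReal_le (measure_ne_top P _) hτ0).mpr (hcon _ hq)
  have : (P (Set.Iio c)).toReal ≤ τ := by
    calc (P (Set.Iio c)).toReal ≤ (ENNReal.ofReal τ).toReal :=
          ENNReal.toReal_mono ENNReal.ofReal_ne_top hle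
      _ = τ := ENNReal.toReal_ofReal hτ0
  linarith

lemma exists_gt_quantile (P : Measure ℝ) [IsProbabilityMeasure P] {c τ : ℝ}
    (h : (P (Set.Iic c)).toReal < τ) : ∃ q > c, (P (Set.Iic q)).toReal < τ := by
  by_contra hcon
  push_neg at hcon
  have hI : Set.Iic c = ⋂ n : ℕ, Set.Iic (c + 1 / (n + 1)) := by
    ext x
    simp only [Set.mem_Iic, Set.mem_iInter]
    constructor
    · intro hx n
      have hp : (0:ℝ) < 1 / (n + 1) := by positivity
      linarith
    · intro hx
      by_contra hlt
      push_neg at hlt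
      obtain ⟨n, hn⟩ := exists_nat_one_div_lt (sub_pos.mpr hlt)
      have := hx n
      linarith
  have hanti : Antitone fun n : ℕ => Set.Iic (c + 1 / ((n:ℝ) + 1)) := by
    intro m n hmn
    apply Set.Iic_subset_Iic.mpr
    have h1 : (1:ℝ) / (n + 1) ≤ 1 / (m + 1) := by
      apply one_div_le_one_div_of_le (by positivity)
      exact_mod_cast by omega
    linarith
  have hge : ENNReal.ofReal τ ≤ P (Set.Iic c) := by
    rw [hI, Directed.measure_iInter (fun n => measurableSet_Iic.nullMeasurableSet)
      hanti.directed_ge ⟨0, measure_ne_top P _⟩]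
    refine le_iInf fun n => ?_
    have hq : c < c + 1 / ((n:ℝ) + 1) := by
      have hp : (0:ℝ) < 1 / (n + 1) := by positivity
      linarith
    exact ENNReal.ofReal_le_of_le_toReal (hcon _ hq)
  have hτ0 : 0 ≤ τ := le_trans ENNReal.toReal_nonneg h.le
  have : τ ≤ (P (Set.Iic c)).toReal := by
    calc τ = (ENNReal.ofReal τ).toReal := (ENNReal.toReal_ofReal hτ0).symm
      _ ≤ (P (Set.Iic c)).toReal := ENNReal.toReal_mono (measure_ne_top P _) hge
  linarith

theorem stmt14 (P : Measure ℝ) [IsProbabilityMeasure P] (τ : ℝ) (hτ : τ ∈ Set.Ioo (0:ℝ) 1)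
    (qbar : ℝ) :
    (∀ q : ℝ, ∫ x, (rho τ (x - qbar) - rho τ x) ∂P ≤ ∫ x, (rho τ (x - q) - rho τ x) ∂P) ↔
      ((P (Set.Iio qbar)).toReal ≤ τ ∧ τ ≤ (P (Set.Iic qbar)).toReal) := by
  constructor
  · intro hmin
    constructor
    · by_contra hlt
      push_neg at hlt
      obtain ⟨q, hq, hFq⟩ := exists_lt_quantile P hτ.1.le hlt
      have hest := est_upper P hτ q qbar
      have hneg : (τ - (P (Set.Iic q)).toReal) * (qbar - q) < 0 :=
        mul_neg_of_neg_of_pos (by linarith) (by linarith)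
      have := hmin q
      linarith
    · by_contra hlt
      push_neg at hlt
      obtain ⟨q, hq, hFq⟩ := exists_gt_quantile P hlt
      have hest := est_upper P hτ q qbar
      have hneg : (τ - (P (Set.Iic q)).toReal) * (qbar - q) < 0 :=
        mul_neg_of_pos_of_neg (by linarith) (by linarith)
      have := hmin q
      linarith
  · rintro ⟨hlo, hhi⟩ q
    rcases le_total q qbar with h | h
    · have hest := est_lower_lt P hτ q qbar
      have hpos : 0 ≤ (τ - (P (Set.Iio qbar)).toReal) * (qbar - q) :=
        mul_nonneg (by linarith) (by linarith)
      linarith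
    · have hest := est_lower_le P hτ q qbar
      have hpos : 0 ≤ (τ - (P (Set.Iic qbar)).toReal) * (qbar - q) :=
        by nlinarith
      linarith
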